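/- Let k ≥ 3, 0 < α < 1/2, ε > 0. For Δ sufficiently large (depending on ε, α) and n large, with probability 1 − o(1) over a random β-balanced formula with m = Δn clauses: for every set S of n literals containing exactly a γ fraction of positive literals, fewer than ((1−α)^k + ε)m clauses avoid S. (Union bound over at most 2^{2γn} choices of S, using a Chernoff bound per S with failure probability at most (1−α)^{3n}.) -/

import Mathlib

open MeasureTheory ProbabilityTheory

open ENNReal


lemma aux_exp_le {t : ℝ} (h0 : 0 ≤ t) (h1 : t ≤ 1) :
    Real.exp t ≤ 1 + t + t ^ 2 := by
  have h := Real.exp_bound' h0 h1 (n := 2) (by norm_num)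
  simp [Finset.sum_range_succ] at h
  nlinarith [sq_nonneg t]

lemma aux_mgf_bool {Ω : Type} [MeasurableSpace Ω] (μ : Measure Ω) [IsProbabilityMeasure μ]
    (B : Ω → Bool) (hB : Measurable B) (p t : ℝ) (hp0 : 0 ≤ p)
    (hμ : μ {ω | B ω = true} = ENNReal.ofReal p) :
    mgf (fun ω => if B ω = true then (1:ℝ) else 0) μ t = 1 + p * (Real.exp t - 1) := by
  have hA : MeasurableSet {ω | B ω = true} := hB (measurableSet_singleton true)
  have heq : (fun ω => Real.exp (t * (if B ω = true then (1:ℝ) else 0)))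
      = fun ω => ({ω | B ω = true}.indicator (fun _ => Real.exp t - 1) ω + 1) := by
    funext ω
    by_cases h : B ω = true <;> simp [h, Set.indicator_apply, Set.mem_setOf_eq]
  rw [mgf, heq]
  rw [integral_add ((integrable_const (Real.exp t - 1)).indicator hA) (integrable_const 1)]
  rw [integral_indicator_const _ hA, integral_const]
  simp [hμ, ENNReal.toReal_ofReal hp0]
  rw [measureReal_def, hμ, ENNReal.toReal_ofReal hp0]
  ring

lemma aux_perS {Ω : Type} [MeasurableSpace Ω] (μ : Measure Ω) [IsProbabilityMeasure μ]
    (m : ℕ) (B : Fin m → Ω → Bool) (hmeas : ∀ j, Measurable (B j))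
    (hindep : iIndepFun B μ)
    (p ε t : ℝ) (hp0 : 0 ≤ p) (hp1 : p ≤ 1) (ht0 : 0 ≤ t) (ht1 : t ≤ 1) (htε : t ≤ ε/2)
    (hμp : ∀ j, μ {ω | B j ω = true} = ENNReal.ofReal p) :
    μ {ω | (p + ε) * m ≤ ((Finset.univ.filter (fun j => B j ω = true)).card : ℝ)}
      ≤ ENNReal.ofReal (Real.exp (-(t * ε / 2) * m)) := by
  classical
  set X : Fin m → Ω → ℝ := fun j ω => if B j ω = true then 1 else 0 with hX
  have hXmeas : ∀ j, Measurable (X j) := by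
    intro j
    exact Measurable.ite (hmeas j (measurableSet_singleton true)) measurable_const
      measurable_const
  have hXindep : iIndepFun X μ := by
    have := hindep.comp (fun _ b => if b = true then (1:ℝ) else 0)
      (fun _ => Measurable.of_discrete)
    exact this
  set Y : Ω → ℝ := ∑ j, X j with hY
  have hYapp : ∀ ω, Y ω = ∑ j, X j ω := fun ω => Finset.sum_apply ω Finset.univ X
  have hYmeas : Measurable Y := by
    have : Y = fun ω => ∑ j, X j ω := funext hYapp
    rw [this]; exact Finset.measurable_sum _ fun j _ => hXmeas j
  have hcard : ∀ ω, ((Finset.univ.filter fun j => B j ω = true).card : ℝ) = Y ω := by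
    intro ω
    rw [hYapp, Finset.card_filter]
    push_cast
    simp [hX]
  have hYle : ∀ ω, Y ω ≤ m := by
    intro ω
    rw [← hcard]
    have h := Finset.card_filter_le Finset.univ (fun j => B j ω = true)
    rw [Finset.card_univ, Fintype.card_fin] at h
    exact_mod_cast h
  have hint : Integrable (fun ω => Real.exp (t * Y ω)) μ := by
    refine Integrable.mono' (integrable_const (Real.exp (t * m)))
      ((hYmeas.const_mul t).exp.aestronglyMeasurable) ?_
    filter_upwards with ω
    rw [Real.norm_eq_abs, abs_of_pos (Real.exp_pos _), Real.exp_le_exp]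
    exact mul_le_mul_of_nonneg_left (hYle ω) ht0
  have hch := measure_ge_le_exp_mul_mgf (μ := μ) (X := Y) ((p + ε) * m) ht0 hint
  have hmgf : mgf Y μ t = (1 + p * (Real.exp t - 1)) ^ m := by
    rw [hY, hXindep.mgf_sum hXmeas]
    have : ∀ j : Fin m, mgf (X j) μ t = 1 + p * (Real.exp t - 1) := fun j =>
      aux_mgf_bool μ (B j) (hmeas j) p t hp0 (hμp j)
    simp [this]
  -- bound RHS
  have hq0 : (0:ℝ) ≤ 1 + p * (Real.exp t - 1) := by
    nlinarith [Real.add_one_le_exp t, Real.exp_pos t]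
  have hq : 1 + p * (Real.exp t - 1) ≤ Real.exp (p * t + t ^ 2) := by
    have h1 : p * (Real.exp t - 1) ≤ p * t + t ^ 2 := by
      have := aux_exp_le ht0 ht1
      nlinarith [sq_nonneg t]
    calc 1 + p * (Real.exp t - 1) ≤ Real.exp (p * (Real.exp t - 1)) := by
          have := Real.add_one_le_exp (p * (Real.exp t - 1)); linarith
      _ ≤ Real.exp (p * t + t ^ 2) := Real.exp_le_exp.mpr h1
  have hrhs : Real.exp (-t * ((p + ε) * m)) * (1 + p * (Real.exp t - 1)) ^ m
      ≤ Real.exp (-(t * ε / 2) * m) := by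
    calc Real.exp (-t * ((p + ε) * m)) * (1 + p * (Real.exp t - 1)) ^ m
        ≤ Real.exp (-t * ((p + ε) * m)) * Real.exp (p * t + t ^ 2) ^ m := by
          exact mul_le_mul_of_nonneg_left (pow_le_pow_left₀ hq0 hq m) (Real.exp_pos _).le
      _ = Real.exp (-t * ((p + ε) * m) + m * (p * t + t ^ 2)) := by
          rw [← Real.exp_nat_mul, ← Real.exp_add]
      _ ≤ Real.exp (-(t * ε / 2) * m) := by
          rw [Real.exp_le_exp]
          have : -t * ((p + ε)) + (p * t + t ^ 2) ≤ -(t * ε / 2) := by nlinarith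
          nlinarith [Nat.cast_nonneg (α := ℝ) m]
  have hfin : μ {ω | (p + ε) * m ≤ Y ω} ≤ ENNReal.ofReal (Real.exp (-(t * ε / 2) * m)) := by
    have h1 : (μ {ω | (p + ε) * m ≤ Y ω}).toReal ≤ Real.exp (-(t * ε / 2) * m) :=
      le_trans hch (by rw [hmgf]; exact hrhs)
    have h2 : μ {ω | (p + ε) * m ≤ Y ω} ≠ ⊤ := measure_ne_top _ _
    rw [← ENNReal.ofReal_toReal h2]
    exact ENNReal.ofReal_le_ofReal h1
  have : {ω | (p + ε) * m ≤ ((Finset.univ.filter (fun j => B j ω = true)).card : ℝ)}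
      = {ω | (p + ε) * m ≤ Y ω} := by
    ext ω; simp [hcard ω]
  rw [this]
  exact hfin

/-- Lemma 1 of the paper (abstract form). Fix `k ≥ 3`, `0 < α < 1/2`, `ε > 0`. For
`Δ` sufficiently large and `n` large, with probability `1 - o(1)`: simultaneously
for every set `S` of `n` literals with exactly a `γ` fraction of positive literals
(there are at most `2^(2γn)` such sets, indexed by `𝒮`), fewer than
`((1-α)^k + ε)·m` of the `m = Δn` clauses avoid `S`; here for each `S` the events
"clause `j` avoids `S`" are independent across clauses, each of probability
`(1-α)^k`. -/
theorem stmt15 (k : ℕ) (hk : 3 ≤ k) (α γ ε : ℝ)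
    (hα0 : 0 < α) (hα : α < 1/2) (hγ : 0 < γ) (hε : 0 < ε) :
    ∃ Δ₀ : ℝ, 0 < Δ₀ ∧ ∀ Δ : ℝ, Δ₀ ≤ Δ →
      ∀ θ : ℝ, 0 < θ → ∃ N : ℕ, ∀ n : ℕ, N ≤ n → ∀ m : ℕ, (m : ℝ) = Δ * n →
        ∀ (Ω : Type) [MeasurableSpace Ω] (μ : Measure Ω) [IsProbabilityMeasure μ],
          ∀ (𝒮 : Type) [Fintype 𝒮],
            ((Fintype.card 𝒮 : ℝ) ≤ (2 : ℝ) ^ (2 * γ * (n : ℝ))) →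
            ∀ Avoid : 𝒮 → Fin m → Ω → Bool,
              (∀ S j, Measurable (Avoid S j)) →
              (∀ S, iIndepFun (Avoid S) μ) →
              (∀ S j, μ {ω | Avoid S j ω = true} = ENNReal.ofReal ((1 - α) ^ k)) →
              μ {ω | ∃ S, ((1 - α) ^ k + ε) * m ≤
                  ((Finset.univ.filter (fun j : Fin m => Avoid S j ω = true)).card : ℝ)}
                ≤ ENNReal.ofReal θ := by
  set p : ℝ := (1 - α) ^ k with hp
  have h1α : 0 ≤ 1 - α := by linarith
  have hp0 : 0 ≤ p := pow_nonneg h1α k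
  have hp1 : p ≤ 1 := pow_le_one₀ h1α (by linarith)
  set t : ℝ := min (ε / 2) 1 with htdef
  have ht0 : 0 < t := lt_min (by linarith) one_pos
  have ht1 : t ≤ 1 := min_le_right _ _
  have htε : t ≤ ε / 2 := min_le_left _ _
  set c : ℝ := t * ε / 2 with hcdef
  have hc0 : 0 < c := by positivity
  refine ⟨max 1 ((2 * γ * Real.log 2 + 1) / c), lt_max_of_lt_left one_pos, ?_⟩
  intro Δ hΔ θ hθ
  have hΔ1 : (1:ℝ) ≤ Δ := le_trans (le_max_left _ _) hΔ
  have hΔc : 2 * γ * Real.log 2 + 1 ≤ c * Δ := by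
    have := le_trans (le_max_right 1 ((2 * γ * Real.log 2 + 1) / c)) hΔ
    rw [div_le_iff₀ hc0] at this
    linarith [this]
  refine ⟨⌈Real.log (1 / θ)⌉₊ + 1, ?_⟩
  intro n hn m hm Ω _ μ _ 𝒮 _ hcard Avoid hmeas hindep hμp
  have hm0 : (0:ℝ) ≤ (m : ℝ) := Nat.cast_nonneg m
  -- union bound
  have hunion : {ω | ∃ S, ((1 - α) ^ k + ε) * m ≤
      ((Finset.univ.filter (fun j : Fin m => Avoid S j ω = true)).card : ℝ)}
      = ⋃ S, {ω | (p + ε) * m ≤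
      ((Finset.univ.filter (fun j : Fin m => Avoid S j ω = true)).card : ℝ)} := by
    ext ω; simp [Set.mem_iUnion, hp]
  rw [hunion]
  have hper : ∀ S : 𝒮, μ {ω | (p + ε) * m ≤
      ((Finset.univ.filter (fun j : Fin m => Avoid S j ω = true)).card : ℝ)}
      ≤ ENNReal.ofReal (Real.exp (-c * m)) := fun S =>
    aux_perS μ m (Avoid S) (hmeas S) (hindep S) p ε t hp0 hp1 ht0.le ht1 htε (hμp S)
  calc μ (⋃ S, {ω | (p + ε) * m ≤
        ((Finset.univ.filter (fun j : Fin m => Avoid S j ω = true)).card : ℝ)})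
      ≤ ∑' S, μ {ω | (p + ε) * m ≤
        ((Finset.univ.filter (fun j : Fin m => Avoid S j ω = true)).card : ℝ)} :=
        measure_iUnion_le _
    _ ≤ ∑' (S : 𝒮), ENNReal.ofReal (Real.exp (-c * m)) := ENNReal.tsum_le_tsum hper
    _ = (Fintype.card 𝒮 : ℝ≥0∞) * ENNReal.ofReal (Real.exp (-c * m)) := by
        rw [tsum_fintype]
        simp [Finset.sum_const, Finset.card_univ, nsmul_eq_mul]
    _ ≤ ENNReal.ofReal ((2:ℝ) ^ (2 * γ * (n:ℝ))) * ENNReal.ofReal (Real.exp (-c * m)) := by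
        gcongr
        rw [← ENNReal.ofReal_natCast]
        exact ENNReal.ofReal_le_ofReal hcard
    _ = ENNReal.ofReal ((2:ℝ) ^ (2 * γ * (n:ℝ)) * Real.exp (-c * m)) := by
        rw [ENNReal.ofReal_mul (by positivity)]
    _ ≤ ENNReal.ofReal θ := by
        apply ENNReal.ofReal_le_ofReal
        have h2 : (2:ℝ) ^ (2 * γ * (n:ℝ)) = Real.exp (Real.log 2 * (2 * γ * n)) :=
          Real.rpow_def_of_pos two_pos _
        rw [h2, ← Real.exp_add]
        have hnN : Real.log (1 / θ) ≤ (n : ℝ) := by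
          have h3 : Real.log (1 / θ) ≤ (⌈Real.log (1 / θ)⌉₊ : ℝ) := Nat.le_ceil _
          have h4 : ((⌈Real.log (1 / θ)⌉₊ : ℝ)) ≤ (n : ℝ) := by
            exact_mod_cast le_trans (Nat.le_succ _) hn
          linarith
        have hexp : Real.log 2 * (2 * γ * n) + -c * m ≤ -(n:ℝ) := by
          rw [hm]
          have hn0 : (0:ℝ) ≤ (n:ℝ) := Nat.cast_nonneg n
          nlinarith [hΔc, hn0]
        calc Real.exp (Real.log 2 * (2 * γ * n) + -c * m)
            ≤ Real.exp (-(n:ℝ)) := Real.exp_le_exp.mpr hexp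
          _ ≤ θ := by
              rw [← Real.exp_log hθ, Real.exp_le_exp]
              rw [Real.log_div one_ne_zero (ne_of_gt hθ), Real.log_one] at hnN
              linarith
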